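/- Let K be a number field of degree d with regulator R_K, suppose the unit rank q = r + s − 1 is positive, and let u₁,…,u_q be a basis of the unit lattice l(U) ⊆ Σ ⊆ ℝ^{q+1} with orthogonality defect Ω(u₁,…,u_q) at most d^{2d} and with |u_j| ≥ 1/Q > 0 for all j, where Q depends only on d. Set n_j = ⌊|u_j|⌋ + 1 and t = n₁⋯n_q. Then √(q+1) R_K < t ≤ (1+Q)^q · d^{2d} · √(q+1) R_K. -/

import Mathlib

open NumberField

open Finset Matrix in
/-- Hadamard's inequality in Gram-matrix form. -/
lemma hadamard_gram {E : Type*} [NormedAddCommGroup E] [InnerProductSpace ℝ E]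
    [FiniteDimensional ℝ E] {n : ℕ} (h : Module.finrank ℝ E = n) (f : Fin n → E) :
    (Matrix.of fun i j => (inner ℝ (f i) (f j) : ℝ)).det ≤ ∏ i, ‖f i‖ ^ 2 := by
  classical
  have h' : Module.finrank ℝ E = Fintype.card (Fin n) := by simpa using h
  set B : OrthonormalBasis (Fin n) ℝ E :=
    @InnerProductSpace.gramSchmidtOrthonormalBasis ℝ E _ _ _ (Fin n) _ _
      (inferInstance : WellFoundedLT (Fin n)) _ _ h' f with hB
  have hdet0 : B.toBasis.det f = ∏ i, (inner ℝ (B i) (f i) : ℝ) :=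
    @InnerProductSpace.gramSchmidtOrthonormalBasis_det ℝ E _ _ _ (Fin n) _ _
      (inferInstance : WellFoundedLT (Fin n)) _ _ h' f _
  set T := B.toBasis.toMatrix f with hT
  have hGram : (Matrix.of fun i j => (inner ℝ (f i) (f j) : ℝ)) = Tᵀ * T := by
    ext i j
    simp only [Matrix.mul_apply, Matrix.transpose_apply, Matrix.of_apply]
    have hTk : ∀ k i, T k i = (inner ℝ (B k) (f i) : ℝ) := fun k i => by
      rw [hT, Module.Basis.toMatrix_apply, OrthonormalBasis.coe_toBasis_repr_apply,
        B.repr_apply_apply]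
    simp_rw [hTk]
    rw [← B.sum_inner_mul_inner (f i) (f j)]
    congr 1; ext k; rw [real_inner_comm (f i) (B k)]
  have hdetT : T.det = ∏ i, (inner ℝ (B i) (f i) : ℝ) := by
    rw [hT, ← Module.Basis.det_apply, hdet0]
  calc (Matrix.of fun i j => (inner ℝ (f i) (f j) : ℝ)).det
      = T.det ^ 2 := by rw [hGram, Matrix.det_mul, Matrix.det_transpose, sq]
    _ = ∏ i, (inner ℝ (B i) (f i) : ℝ) ^ 2 := by rw [hdetT, ← Finset.prod_pow]
    _ ≤ ∏ i, ‖f i‖ ^ 2 := by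
        apply Finset.prod_le_prod (fun i _ => sq_nonneg _)
        intro i _
        rw [sq, sq]
        calc (inner ℝ (B i) (f i) : ℝ) * inner ℝ (B i) (f i)
            = |(inner ℝ (B i) (f i) : ℝ)| * |(inner ℝ (B i) (f i) : ℝ)| := (abs_mul_abs_self _).symm
          _ ≤ (‖B i‖ * ‖f i‖) * (‖B i‖ * ‖f i‖) :=
              mul_le_mul (abs_real_inner_le_norm _ _) (abs_real_inner_le_norm _ _)
                (abs_nonneg _) (by positivity)
          _ = ‖f i‖ * ‖f i‖ := by rw [B.orthonormal.1 i]; ring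

open Finset Matrix in
/-- If the rows of `A` sum to zero, then `det (A * Aᵀ) = (q+1) * (det N)²`
where `N` drops the column `w₀`. -/
lemma det_mul_transpose_of_rowsum_zero {ι' : Type*} [Fintype ι'] [DecidableEq ι']
    (w₀ : ι') (A : Matrix {w : ι' // w ≠ w₀} ι' ℝ)
    (hA : ∀ i, ∑ v, A i v = 0) :
    (A * Aᵀ).det =
      ((Fintype.card {w : ι' // w ≠ w₀} : ℝ) + 1) *
        (Matrix.of fun i w : {w : ι' // w ≠ w₀} => A i w.val).det ^ 2 := by
  classical
  set N : Matrix {w : ι' // w ≠ w₀} {w : ι' // w ≠ w₀} ℝ :=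
    Matrix.of fun i w => A i w.val with hN
  set S : Matrix {w : ι' // w ≠ w₀} ι' ℝ :=
    Matrix.of fun w v => (if v = (w : ι') then (1 : ℝ) else 0) -
      (if v = w₀ then (1 : ℝ) else 0) with hS
  have hsubsum : ∀ i, ∑ w : {w : ι' // w ≠ w₀}, A i (w : ι') = - A i w₀ := by
    intro i
    have h1 : ∑ v ∈ Finset.univ.erase w₀, A i v = ∑ w : {w : ι' // w ≠ w₀}, A i (w : ι') :=
      Finset.sum_subtype _ (fun x => by simp [Finset.mem_erase]) _
    have h2 := Finset.add_sum_erase Finset.univ (A i) (Finset.mem_univ w₀)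
    rw [hA i, h1] at h2
    linarith
  have hANS : A = N * S := by
    ext i v
    rw [Matrix.mul_apply]
    simp only [hS, hN, Matrix.of_apply, mul_sub, mul_ite, mul_one, mul_zero,
      Finset.sum_sub_distrib]
    by_cases hv : v = w₀
    · subst hv
      rw [Finset.sum_eq_zero (fun w _ => by rw [if_neg (fun h => w.2 h.symm)])]
      simp [hsubsum i]
    · have hco : ∀ w : {w : ι' // w ≠ w₀}, (v = (w : ι')) = ((⟨v, hv⟩ : {w : ι' // w ≠ w₀}) = w) :=
        fun w => by simp [Subtype.ext_iff]
      simp_rw [hco]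
      rw [Finset.sum_ite_eq Finset.univ (⟨v, hv⟩ : {w : ι' // w ≠ w₀})]
      simp [hv]
  have key : ∀ a b : ι', (∑ v, (if v = a then (1:ℝ) else 0) * (if v = b then 1 else 0))
      = if a = b then 1 else 0 := by
    intro a b
    simp only [ite_mul, one_mul, zero_mul]
    rw [Finset.sum_ite_eq' Finset.univ a]
    simp
  have hSS : S * Sᵀ = 1 + Matrix.replicateCol Unit (fun _ => (1 : ℝ)) *
      Matrix.replicateRow Unit (fun _ => (1 : ℝ)) := by
    ext w w'
    rw [Matrix.mul_apply]
    have hterm : ∀ v, S w v * Sᵀ v w' =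
        ((if v = (w : ι') then (1:ℝ) else 0) * (if v = (w' : ι') then 1 else 0))
        - ((if v = (w : ι') then (1:ℝ) else 0) * (if v = w₀ then 1 else 0))
        - ((if v = w₀ then (1:ℝ) else 0) * (if v = (w' : ι') then 1 else 0))
        + ((if v = w₀ then (1:ℝ) else 0) * (if v = w₀ then 1 else 0)) := by
      intro v
      simp only [hS, Matrix.transpose_apply, Matrix.of_apply]
      ring
    simp_rw [hterm]
    rw [Finset.sum_add_distrib, Finset.sum_sub_distrib, Finset.sum_sub_distrib,
      key, key, key, key]
    rw [if_neg w.2, if_neg (fun h : w₀ = (w' : ι') => w'.2 h.symm), if_pos rfl]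
    simp only [Matrix.add_apply, Matrix.one_apply, Matrix.mul_apply, Matrix.replicateCol_apply,
      Matrix.replicateRow_apply, Finset.univ_unique, Finset.sum_singleton, one_mul, Subtype.coe_inj]
    ring
  have hdetSS : (S * Sᵀ).det = (Fintype.card {w : ι' // w ≠ w₀} : ℝ) + 1 := by
    rw [hSS, Matrix.det_one_add_replicateCol_mul_replicateRow]
    simp [dotProduct, add_comm]
  calc (A * Aᵀ).det = (N * (S * Sᵀ) * Nᵀ).det := by
        rw [hANS, Matrix.transpose_mul, ← Matrix.mul_assoc, Matrix.mul_assoc N S Sᵀ]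
    _ = N.det * ((S * Sᵀ).det) * N.det := by
        rw [Matrix.det_mul, Matrix.det_mul, Matrix.det_transpose]
    _ = ((Fintype.card {w : ι' // w ≠ w₀} : ℝ) + 1) * N.det ^ 2 := by rw [hdetSS]; ring

open NumberField.Units NumberField.Units.dirichletUnitTheorem NumberField.InfinitePlace in
lemma sum_coords_eq_zero {K : Type*} [Field K] [NumberField K] (η : (𝓞 K)ˣ) :
    ∑ v : InfinitePlace K, (v.mult : ℝ) * Real.log (v (algebraMap (𝓞 K) K (η : 𝓞 K))) = 0 := by
  have hne : ∀ v : InfinitePlace K, v (algebraMap (𝓞 K) K (η : 𝓞 K)) ≠ 0 :=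
    fun v => (map_ne_zero v).mpr (RingOfIntegers.coe_ne_zero_iff.mpr (η.ne_zero))
  have h := congr_arg Real.log (prod_eq_abs_norm (algebraMap (𝓞 K) K (η : 𝓞 K)))
  rw [Real.log_prod (fun v _ => pow_ne_zero _ (hne v))] at h
  simp_rw [Real.log_pow] at h
  rw [h, show (algebraMap (𝓞 K) K (η : 𝓞 K)) = ((η : 𝓞 K) : K) from rfl,
    Units.norm, Rat.cast_one, Real.log_one]

lemma apply_sum_euclidean {ι : Type*} [Fintype ι] {n : ℕ} (g : Fin n → ℝ)
    (u : Fin n → EuclideanSpace ℝ ι) (v : ι) :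
    (∑ j, g j • u j) v = ∑ j, g j * u j v := by
  induction (Finset.univ : Finset (Fin n)) using Finset.induction_on with
  | empty => simp
  | insert _ _ h ih =>
      rw [Finset.sum_insert h, Finset.sum_insert h, ← ih]
      rfl

/-- The image of the unit group under the logarithmic map
`l(η) = (d_v log|σ_v(η)|)_v`, viewed inside the Euclidean space `ℝ^{q+1}` with
coordinates indexed by the archimedean places (it lies in the sum-zero hyperplane `Σ`). -/
def unitLogSet (K : Type*) [Field K] [NumberField K] :
    Set (EuclideanSpace ℝ (InfinitePlace K)) :=
  {x | ∃ η : (𝓞 K)ˣ, ∀ v : InfinitePlace K,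
    x v = (v.mult : ℝ) * Real.log (v (algebraMap (𝓞 K) K (η : 𝓞 K)))}

set_option maxSynthPendingDepth 2 in
set_option maxHeartbeats 1000000 in
open Matrix NumberField.Units NumberField.Units.dirichletUnitTheorem NumberField.InfinitePlace in
/-- Schmidt's partition bound: if `u₁,…,u_q` is a `ℤ`-basis of the unit lattice `l(U)`
(of determinant `√(q+1)·R_K`) with orthogonality defect at most `d^{2d}` and with
`|u_j| ≥ 1/Q > 0` for all `j`, and `n_j = ⌊|u_j|⌋ + 1`, `t = n₁⋯n_q`, then
`√(q+1)·R_K < t ≤ (1+Q)^q·d^{2d}·√(q+1)·R_K`. -/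
theorem stmt14 (K : Type*) [Field K] [NumberField K]
    (d : ℕ) (hd : Module.finrank ℚ K = d)
    (q : ℕ) (hq : q = Units.rank K) (hq0 : 0 < q)
    (u : Fin q → EuclideanSpace ℝ (InfinitePlace K))
    (hmem : ∀ j, u j ∈ unitLogSet K)
    (hspan : ∀ x ∈ unitLogSet K, ∃ c : Fin q → ℤ, x = ∑ j, c j • u j)
    (hindep : LinearIndependent ℝ u)
    (Q : ℝ) (hQ0 : 0 < Q)
    (hlow : ∀ j, 1 / Q ≤ ‖u j‖)
    (hΩ : ∏ j, ‖u j‖ ≤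
      (d : ℝ) ^ (2 * d) * (Real.sqrt ((q : ℝ) + 1) * Units.regulator K)) :
    Real.sqrt ((q : ℝ) + 1) * Units.regulator K <
        ((∏ j, (⌊‖u j‖⌋₊ + 1) : ℕ) : ℝ) ∧
      ((∏ j, (⌊‖u j‖⌋₊ + 1) : ℕ) : ℝ) ≤
        (1 + Q) ^ q * (d : ℝ) ^ (2 * d) *
          (Real.sqrt ((q : ℝ) + 1) * Units.regulator K) := by
  classical
  have hregpos := Units.regulator_pos K
  choose η hη using hmem
  have hsum : ∀ j, ∑ v, u j v = 0 := by
    intro j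
    rw [Finset.sum_congr rfl (fun v _ => hη j v)]
    exact sum_coords_eq_zero (η j)
  have hcard : Fintype.card {w : InfinitePlace K // w ≠ (w₀ : InfinitePlace K)} = q := by
    rw [Fintype.card_subtype_compl, Fintype.card_subtype_eq, hq, Units.rank]
  let e : Fin q ≃ {w : InfinitePlace K // w ≠ (w₀ : InfinitePlace K)} :=
    Fintype.equivOfCardEq (by rw [Fintype.card_fin, hcard])
  have hlog : ∀ j, logEmbedding K (Additive.ofMul (η j)) =
      (fun w : {w : InfinitePlace K // w ≠ w₀} => u j w.val) := by
    intro j; funext w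
    rw [logEmbedding_component, hη j w.val]
  have hmemL : ∀ j, (fun w : {w : InfinitePlace K // w ≠ w₀} => u j w.val) ∈ unitLattice K :=
    fun j => Submodule.mem_map.mpr ⟨Additive.ofMul (η j), Submodule.mem_top, hlog j⟩
  -- ℝ-linear independence of the truncated vectors
  have hindep' : LinearIndependent ℝ
      (fun j : Fin q => (fun w : {w : InfinitePlace K // w ≠ w₀} => u j w.val)) := by
    rw [Fintype.linearIndependent_iff] at hindep ⊢
    intro g hg
    apply hindep g
    have hgw : ∀ w : {w : InfinitePlace K // w ≠ w₀}, ∑ j, g j * u j w.val = 0 := by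
      intro w
      have h := congr_fun hg w
      simpa [Finset.sum_apply] using h
    have htot : ∑ v, (∑ j, g j * u j v) = 0 := by
      rw [Finset.sum_comm]
      exact Finset.sum_eq_zero fun j _ => by rw [← Finset.mul_sum, hsum j, mul_zero]
    have hw0 : ∑ j, g j * u j (w₀ : InfinitePlace K) = 0 := by
      have h1 : ∑ v ∈ Finset.univ.erase (w₀ : InfinitePlace K), (∑ j, g j * u j v) =
          ∑ w : {w : InfinitePlace K // w ≠ w₀}, ∑ j, g j * u j w.val :=
        Finset.sum_subtype _ (fun x => by simp [Finset.mem_erase]) _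
      have h2 := Finset.add_sum_erase Finset.univ (fun v => ∑ j, g j * u j v)
        (Finset.mem_univ (w₀ : InfinitePlace K))
      rw [htot, h1, Finset.sum_eq_zero (fun w _ => hgw w)] at h2
      linarith
    ext v
    rw [apply_sum_euclidean g u v]
    by_cases hv : v = (w₀ : InfinitePlace K)
    · rw [hv]; exact hw0
    · exact hgw ⟨v, hv⟩
  have hliℤ : LinearIndependent ℤ
      (fun w : {w : InfinitePlace K // w ≠ w₀} =>
        (fun w' : {w : InfinitePlace K // w ≠ w₀} => u (e.symm w) w'.val)) := by
    have h1 := hindep'.comp e.symm e.symm.injective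
    exact h1.restrict_scalars (fun a b h => by simpa using h)
  let vfam : {w : InfinitePlace K // w ≠ w₀} → unitLattice K :=
    fun w => ⟨_, hmemL (e.symm w)⟩
  have hlivfam : LinearIndependent ℤ vfam :=
    LinearIndependent.of_comp (unitLattice K).subtype hliℤ
  have hspanv : ⊤ ≤ Submodule.span ℤ (Set.range vfam) := by
    rintro x -
    obtain ⟨ξ, -, hξ⟩ := Submodule.mem_map.mp x.2
    have hy : (WithLp.toLp 2 fun v : InfinitePlace K =>
        (v.mult : ℝ) * Real.log (v (algebraMap (𝓞 K) K ((ξ.toMul : (𝓞 K)ˣ) : 𝓞 K))))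
        ∈ unitLogSet K := ⟨ξ.toMul, fun v => rfl⟩
    obtain ⟨c, hc⟩ := hspan _ hy
    have hxval : x = ∑ j, c j • vfam (e j) := by
      apply Subtype.ext
      have hcoe : ((∑ j, c j • vfam (e j) : unitLattice K) :
          {w : InfinitePlace K // w ≠ w₀} → ℝ) = ∑ j, (c j : ℝ) • (vfam (e j) : _ → ℝ) := by
        rw [← Submodule.coe_subtype, map_sum]
        exact Finset.sum_congr rfl fun j _ => by
          rw [map_zsmul, Int.cast_smul_eq_zsmul]
      rw [hcoe]
      funext w
      have hx1 : (x : {w : InfinitePlace K // w ≠ w₀} → ℝ) w =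
          (w.val.mult : ℝ) * Real.log (w.val (algebraMap (𝓞 K) K ((ξ.toMul : (𝓞 K)ˣ) : 𝓞 K))) := by
        rw [← hξ]; rfl
      have hc2 : ∑ j, c j • u j = ∑ j, ((c j : ℝ)) • u j :=
        Finset.sum_congr rfl fun j _ => (Int.cast_smul_eq_zsmul ℝ (c j) (u j)).symm
      rw [hx1, show ((w.val.mult : ℝ) * Real.log (w.val (algebraMap (𝓞 K) K
          ((ξ.toMul : (𝓞 K)ˣ) : 𝓞 K)))) = (∑ j, c j • u j) w.val from congrArg (fun x => x w.val) hc,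
        hc2, apply_sum_euclidean (fun j => (c j : ℝ)) u w.val]
      rw [Finset.sum_apply]
      exact Finset.sum_congr rfl fun j _ => by
        simp [vfam, Equiv.symm_apply_apply, smul_eq_mul]
    rw [hxval]
    exact Submodule.sum_mem _ fun j _ =>
      Submodule.smul_mem _ _ (Submodule.subset_span ⟨e j, rfl⟩)
  let b : Module.Basis {w : InfinitePlace K // w ≠ w₀} ℤ (unitLattice K) := Module.Basis.mk hlivfam hspanv
  set N : Matrix {w : InfinitePlace K // w ≠ w₀} {w : InfinitePlace K // w ≠ w₀} ℝ :=
    Matrix.of fun w w' => u (e.symm w) w'.val with hN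
  have hregdet : Units.regulator K = |N.det| := by
    rw [Units.regulator, ZLattice.covolume_eq_det (unitLattice K) b]
    have hbN : (Matrix.of (Subtype.val ∘ ⇑b)) = N := by
      ext w w'
      simp [b, Module.Basis.coe_mk, vfam, hN]
    rw [hbN]
  set A : Matrix {w : InfinitePlace K // w ≠ w₀} (InfinitePlace K) ℝ :=
    Matrix.of fun w v => u (e.symm w) v with hA
  have hrows : ∀ w, ∑ v, A w v = 0 := fun w => hsum (e.symm w)
  have hdetA := det_mul_transpose_of_rowsum_zero (w₀ : InfinitePlace K) A hrows
  set G : Matrix (Fin q) (Fin q) ℝ := Matrix.of fun i j => (inner ℝ (u i) (u j) : ℝ) with hG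
  have hAAT : (A * Aᵀ) = G.submatrix e.symm e.symm := by
    ext w w'
    rw [Matrix.mul_apply]
    simp [hA, hG, Matrix.submatrix_apply, PiLp.inner_apply, RCLike.inner_apply]
    exact Finset.sum_congr rfl fun _ _ => mul_comm _ _
  have hdetAG : (A * Aᵀ).det = G.det := by
    rw [hAAT, Matrix.det_submatrix_equiv_self]
  -- Hadamard
  have hFrank : Module.finrank ℝ (Submodule.span ℝ (Set.range u)) = q := by
    rw [finrank_span_eq_card hindep, Fintype.card_fin]
  let f : Fin q → Submodule.span ℝ (Set.range u) :=
    fun j => ⟨u j, Submodule.subset_span ⟨j, rfl⟩⟩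
  have hHad := hadamard_gram hFrank f
  have hGf : (Matrix.of fun i j => (inner ℝ (f i) (f j) : ℝ)) = G := by
    ext i j
    exact Submodule.coe_inner _ (f i) (f j)
  have hGle : G.det ≤ (∏ j, ‖u j‖) ^ 2 := by
    rw [← hGf, ← Finset.prod_pow]
    exact hHad
  have hpos : ∀ j, 0 < ‖u j‖ := fun j => lt_of_lt_of_le (by positivity) (hlow j)
  have hprodpos : 0 < ∏ j, ‖u j‖ := Finset.prod_pos fun j _ => hpos j
  have hsq : (Real.sqrt ((q : ℝ) + 1) * Units.regulator K) ^ 2 = G.det := by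
    rw [mul_pow, Real.sq_sqrt (by positivity), hregdet, sq_abs, ← hdetAG, hdetA, hcard]
    rfl
  have hmain : Real.sqrt ((q : ℝ) + 1) * Units.regulator K ≤ ∏ j, ‖u j‖ := by
    have h0 : 0 ≤ Real.sqrt ((q : ℝ) + 1) * Units.regulator K := by positivity
    nlinarith [hsq, hGle, hprodpos]
  have hcast : ((∏ j, (⌊‖u j‖⌋₊ + 1) : ℕ) : ℝ) = ∏ j, ((⌊‖u j‖⌋₊ : ℝ) + 1) := by
    push_cast; rfl
  constructor
  · have hlt : ∏ j, ‖u j‖ < ∏ j, ((⌊‖u j‖⌋₊ : ℝ) + 1) := by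
      apply Finset.prod_lt_prod_of_nonempty (fun j _ => hpos j)
        (fun j _ => Nat.lt_floor_add_one _)
      exact Finset.univ_nonempty_iff.mpr ⟨⟨0, hq0⟩⟩
    rw [hcast]
    exact lt_of_le_of_lt hmain hlt
  · have hup : ∀ j, ((⌊‖u j‖⌋₊ : ℝ) + 1) ≤ (1 + Q) * ‖u j‖ := by
      intro j
      have h1 : (1 : ℝ) ≤ Q * ‖u j‖ := by
        have := hlow j
        rw [div_le_iff₀ hQ0] at this
        nlinarith
      have h2 : (⌊‖u j‖⌋₊ : ℝ) ≤ ‖u j‖ := Nat.floor_le (norm_nonneg _)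
      nlinarith
    rw [hcast]
    calc ∏ j, ((⌊‖u j‖⌋₊ : ℝ) + 1) ≤ ∏ j, (1 + Q) * ‖u j‖ :=
          Finset.prod_le_prod (fun j _ => by positivity) (fun j _ => hup j)
      _ = (1 + Q) ^ q * ∏ j, ‖u j‖ := by
          rw [Finset.prod_mul_distrib, Finset.prod_const, Finset.card_univ, Fintype.card_fin]
      _ ≤ (1 + Q) ^ q * ((d : ℝ) ^ (2 * d) * (Real.sqrt ((q : ℝ) + 1) * Units.regulator K)) :=
          mul_le_mul_of_nonneg_left hΩ (by positivity)
      _ = (1 + Q) ^ q * (d : ℝ) ^ (2 * d) *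
          (Real.sqrt ((q : ℝ) + 1) * Units.regulator K) := by ring
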